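/- Let p₁, …, pₙ be independent random variables on [0,1], where p_j is uniform on [0,1] and each p_i for i ≠ j has a non-decreasing density on [0,1]. Let S be the event that p_j < min_{i ≠ j} p_i. If P(S) > 0, then for any α ∈ [0,1], P(p_j ≤ α · min_{i ≠ j} p_i | S) ≤ α. -/

import Mathlib

open MeasureTheory ProbabilityTheory Set

/-- Inference on the winning p-value: conditional on `p_j` being the
strict minimum, `P(p_j ≤ α · min_{i ≠ j} p_i | S) ≤ α`. -/
theorem winner_p_value_control
    {Ω : Type*} [MeasurableSpace Ω] (μpr : Measure Ω) [IsProbabilityMeasure μpr]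
    (n : ℕ) (hn : 2 ≤ n)
    (p : Fin n → Ω → ℝ) (hmeas : ∀ i, Measurable (p i))
    (hindep : iIndepFun p μpr)
    (j : Fin n)
    (hunif : μpr.map (p j) = volume.restrict (Set.Icc (0:ℝ) 1))
    (f : Fin n → ℝ → ℝ)
    (hmono : ∀ i, i ≠ j → MonotoneOn (f i) (Set.Icc (0:ℝ) 1))
    (hf_nonneg : ∀ i, i ≠ j → ∀ x ∈ Set.Icc (0:ℝ) 1, 0 ≤ f i x)
    (hdens : ∀ i, i ≠ j → μpr.map (p i)
      = (volume.restrict (Set.Icc (0:ℝ) 1)).withDensity (fun x => ENNReal.ofReal (f i x)))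
    (S : Set Ω) (hSdef : S = {ω | ∀ i, i ≠ j → p j ω < p i ω})
    (hSpos : 0 < μpr S)
    (α : ℝ) (hα : α ∈ Set.Icc (0:ℝ) 1) :
    μpr[|S] {ω | p j ω ≤ α * ⨅ i : {i : Fin n // i ≠ j}, p i.1 ω} ≤ ENNReal.ofReal α := by
  classical
  haveI hne : Nonempty {i : Fin n // i ≠ j} := by
    obtain ⟨i, hi⟩ := Fintype.exists_ne_of_one_lt_card
      (by simp; omega : 1 < Fintype.card (Fin n)) j
    exact ⟨⟨i, hi⟩⟩
  set M : Ω → ℝ := fun ω => ⨅ i : {i : Fin n // i ≠ j}, p i.1 ω with hMdef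
  have hM : Measurable M := Measurable.iInf (fun i => hmeas i.1)
  -- each p i lies a.s. in [0,1]
  have hae : ∀ i, ∀ᵐ ω ∂μpr, p i ω ∈ Icc (0:ℝ) 1 := by
    intro i
    refine (MeasureTheory.ae_map_iff (hmeas i).aemeasurable measurableSet_Icc).1 ?_
    by_cases hij : i = j
    · subst hij; rw [hunif]
      exact ae_restrict_mem measurableSet_Icc
    · rw [hdens i hij]
      exact (withDensity_absolutelyContinuous _ _).ae_le (ae_restrict_mem measurableSet_Icc)
  have hMae : ∀ᵐ ω ∂μpr, M ω ∈ Icc (0:ℝ) 1 := by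
    filter_upwards [ae_all_iff.2 hae] with ω hω
    have i0 : {i : Fin n // i ≠ j} := Classical.arbitrary _
    refine ⟨le_ciInf fun i => (hω i.1).1, ?_⟩
    exact le_trans (ciInf_le (Set.Finite.bddBelow (Set.finite_range _)) i0) (hω i0.1).2
  -- independence of p j and M
  have hind : IndepFun (p j) M μpr := by
    have h1 := hindep.indepFun_finset {j} ({j}ᶜ) disjoint_compl_right hmeas
    have hφ : Measurable (fun g : (({j} : Finset (Fin n)) → ℝ) =>
        g ⟨j, Finset.mem_singleton_self j⟩) := measurable_pi_apply _
    have hψ : Measurable (fun g : ((({j}ᶜ : Finset (Fin n))) → ℝ) =>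
        ⨅ i : {i : Fin n // i ≠ j}, g ⟨i.1, by simp [i.2]⟩) :=
      Measurable.iInf (fun i => measurable_pi_apply _)
    exact h1.comp hφ hψ
  have hprodlaw : μpr.map (fun ω => (M ω, p j ω))
      = (μpr.map M).prod (μpr.map (p j)) :=
    (indepFun_iff_map_prod_eq_prod_map_map hM.aemeasurable (hmeas j).aemeasurable).mp hind.symm
  set ν : Measure ℝ := μpr.map M with hνdef
  have hνae : ∀ᵐ y ∂ν, y ∈ Icc (0:ℝ) 1 :=
    (MeasureTheory.ae_map_iff hM.aemeasurable measurableSet_Icc).2 hMae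
  set I : ENNReal := ∫⁻ y, ENNReal.ofReal y ∂ν with hIdef
  -- μ S = I
  have hSeq : S = {ω | p j ω < M ω} := by
    rw [hSdef]; ext ω
    simp only [mem_setOf_eq, hMdef]
    constructor
    · intro h
      obtain ⟨i0, hi0⟩ := Finite.exists_min (fun i : {i : Fin n // i ≠ j} => p i.1 ω)
      have heq : (⨅ i : {i : Fin n // i ≠ j}, p i.1 ω) = p i0.1 ω :=
        le_antisymm (ciInf_le (Set.Finite.bddBelow (Set.finite_range _)) i0) (le_ciInf hi0)
      rw [heq]
      exact h i0.1 i0.2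
    · intro h i hi
      exact lt_of_lt_of_le h (ciInf_le (Set.Finite.bddBelow (Set.finite_range _)) (⟨i, hi⟩ : {i : Fin n // i ≠ j}))
  have hSmeas : MeasurableSet S := hSeq ▸ measurableSet_lt (hmeas j) hM
  have hS'meas : MeasurableSet {q : ℝ × ℝ | q.2 < q.1} := measurableSet_lt measurable_snd measurable_fst
  have hkey2 : μpr S = I := by
    have : S = (fun ω => (M ω, p j ω)) ⁻¹' {q : ℝ × ℝ | q.2 < q.1} := by
      rw [hSeq]; rfl
    rw [this, ← Measure.map_apply (hM.prodMk (hmeas j)) hS'meas, hprodlaw, hunif,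
      Measure.prod_apply hS'meas]
    refine lintegral_congr_ae ?_
    filter_upwards [hνae] with y hy
    have : Prod.mk y ⁻¹' {q : ℝ × ℝ | q.2 < q.1} = Iio y := rfl
    rw [this, Measure.restrict_apply measurableSet_Iio]
    have : Iio y ∩ Icc (0:ℝ) 1 = Ico 0 y := by
      ext x
      simp only [mem_inter_iff, mem_Iio, mem_Icc, mem_Ico]
      constructor
      · rintro ⟨h1, h2, h3⟩; exact ⟨h2, h1⟩
      · rintro ⟨h1, h2⟩; exact ⟨h2, h1, le_trans (le_of_lt h2) hy.2⟩
    rw [this, Real.volume_Ico, sub_zero]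
  -- μ {p j ≤ α M} = ofReal α * I
  have hA'meas : MeasurableSet {q : ℝ × ℝ | q.2 ≤ α * q.1} :=
    measurableSet_le measurable_snd (measurable_fst.const_mul α)
  have hkey1 : μpr {ω | p j ω ≤ α * M ω} = ENNReal.ofReal α * I := by
    have hpre : {ω | p j ω ≤ α * M ω}
        = (fun ω => (M ω, p j ω)) ⁻¹' {q : ℝ × ℝ | q.2 ≤ α * q.1} := rfl
    rw [hpre, ← Measure.map_apply (hM.prodMk (hmeas j)) hA'meas, hprodlaw, hunif,
      Measure.prod_apply hA'meas]
    have : ∫⁻ y, (volume.restrict (Icc (0:ℝ) 1)) (Prod.mk y ⁻¹' {q : ℝ × ℝ | q.2 ≤ α * q.1}) ∂ν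
        = ∫⁻ y, ENNReal.ofReal α * ENNReal.ofReal y ∂ν := by
      refine lintegral_congr_ae ?_
      filter_upwards [hνae] with y hy
      have hpre2 : Prod.mk y ⁻¹' {q : ℝ × ℝ | q.2 ≤ α * q.1} = Iic (α * y) := rfl
      rw [hpre2, Measure.restrict_apply measurableSet_Iic]
      have hαy1 : α * y ≤ 1 := le_trans (mul_le_mul hα.2 hy.2 hy.1 zero_le_one) (by norm_num)
      have : Iic (α * y) ∩ Icc (0:ℝ) 1 = Icc 0 (α * y) := by
        ext x
        simp only [mem_inter_iff, mem_Iic, mem_Icc]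
        constructor
        · rintro ⟨h1, h2, h3⟩; exact ⟨h2, h1⟩
        · rintro ⟨h1, h2⟩; exact ⟨h2, h1, le_trans h2 hαy1⟩
      rw [this, Real.volume_Icc, sub_zero, ENNReal.ofReal_mul hα.1]
    rw [this, lintegral_const_mul _ (by measurability)]
  -- finish
  have hgoal : {ω | p j ω ≤ α * ⨅ i : {i : Fin n // i ≠ j}, p i.1 ω}
      = {ω | p j ω ≤ α * M ω} := rfl
  rw [hgoal, ProbabilityTheory.cond_apply hSmeas]
  calc (μpr S)⁻¹ * μpr (S ∩ {ω | p j ω ≤ α * M ω})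
      ≤ (μpr S)⁻¹ * μpr {ω | p j ω ≤ α * M ω} :=
        mul_le_mul_right (measure_mono inter_subset_right) _
    _ = (μpr S)⁻¹ * (ENNReal.ofReal α * μpr S) := by rw [hkey1, hkey2]
    _ = ENNReal.ofReal α * ((μpr S)⁻¹ * μpr S) := by ring
    _ = ENNReal.ofReal α := by
        rw [ENNReal.inv_mul_cancel hSpos.ne' (measure_ne_top μpr S), mul_one]
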